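/- Let H be a finite connected bipartite graph with vertex classes U and W, and for S ⊆ U let Γ(S) ⊆ W be the set of neighbors of S. A vector f: U → Z is a hypertree of H on U if and only if f(S) ≤ |Γ(S)| − 1 for every nonempty S ⊆ U and f(U) = |W| − 1, where f(S) denotes the sum of f over S. -/

import Mathlib

open Finset

namespace HTAux

open SimpleGraph Walk


lemma acyclic_of_parent {V : Type} (G : SimpleGraph V) (par : V → V) (ht : V → ℕ)
    (hedge : ∀ x y, G.Adj x y → (par x = y ∧ ht y < ht x) ∨ (par y = x ∧ ht x < ht y)) :
    G.IsAcyclic := by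
  classical
  intro v c hc
  obtain ⟨x, hxs, hmax⟩ := c.support.toFinset.exists_max_image ht
    ⟨v, by simp [List.mem_toFinset]⟩
  rw [List.mem_toFinset] at hxs
  have hmax' : ∀ y ∈ c.support, ht y ≤ ht x := fun y hy => hmax y (List.mem_toFinset.2 hy)
  set c2 := c.rotate x hxs with hc2def
  have hc2 : c2.IsCycle := hc.rotate hxs
  have hsub : ∀ y, y ∈ c2.support → y ∈ c.support := by
    intro y hy
    rw [c2.support_eq_cons] at hy
    rcases List.mem_cons.1 hy with rfl | hy
    · exact hxs
    · have := (support_rotate c (u := x) hxs).mem_iff.1 hy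
      rw [c.support_eq_cons]
      exact List.mem_cons_of_mem _ this
  have hnn : ¬ c2.Nil := by
    rw [nil_iff_length_eq]
    have := hc2.three_le_length
    omega
  obtain ⟨y, hadj, rest, hEq⟩ := Walk.not_nil_iff.1 hnn
  have hlen : 2 ≤ rest.length := by
    have := hc2.three_le_length
    rw [hEq] at this
    simpa using this
  have hnn2 : ¬ rest.reverse.Nil := by
    rw [nil_iff_length_eq, Walk.length_reverse]
    omega
  obtain ⟨z, hadj2, rest2, hEq2⟩ := Walk.not_nil_iff.1 hnn2
  -- s(x,z) ∈ rest.edges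
  have hz_edge : s(x, z) ∈ rest.edges := by
    have : s(x, z) ∈ rest.reverse.edges := by
      rw [hEq2]; simp
    rwa [Walk.edges_reverse, List.mem_reverse] at this
  have hnodup := hc2.edges_nodup
  rw [hEq, Walk.edges_cons] at hnodup
  have hxy_ne : s(x, y) ∉ rest.edges := (List.nodup_cons.1 hnodup).1
  have hyz : y ≠ z := by
    rintro rfl
    exact hxy_ne hz_edge
  -- y, z in c.support
  have hy_sup : y ∈ c.support := by
    apply hsub
    rw [hEq, Walk.support_cons]
    exact List.mem_cons_of_mem _ rest.start_mem_support
  have hz_sup : z ∈ c.support := by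
    apply hsub
    rw [hEq, Walk.support_cons]
    apply List.mem_cons_of_mem
    have : z ∈ rest.reverse.support := by
      rw [hEq2, Walk.support_cons]
      exact List.mem_cons_of_mem _ rest2.start_mem_support
    rwa [Walk.support_reverse, List.mem_reverse] at this
  have h1 : par x = y := by
    rcases hedge x y hadj with ⟨h, _⟩ | ⟨_, hlt⟩
    · exact h
    · exact absurd (hmax' y hy_sup) (by omega)
  have h2 : par x = z := by
    rcases hedge x z hadj2 with ⟨h, _⟩ | ⟨_, hlt⟩
    · exact h
    · exact absurd (hmax' z hz_sup) (by omega)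
  exact hyz (h1 ▸ h2)


/-- degenerate tree: bot graph on a subsingleton nonempty type -/
lemma bot_isTree {V : Type} [Nonempty V] [Subsingleton V] :
    (⊥ : SimpleGraph V).IsTree := by
  constructor
  · constructor
    intro x y
    rw [Subsingleton.elim x y]
  · exact isAcyclic_bot

lemma ncard_nbr {U W : Type} [Fintype W] [DecidableEq W] (T : SimpleGraph (U ⊕ W)) (u : U)
    (h : ∀ u' : U, ¬ T.Adj (Sum.inl u) (Sum.inl u'))
    [DecidablePred fun w => T.Adj (Sum.inl u) (Sum.inr w)] :
    (T.neighborSet (Sum.inl u)).ncard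
      = (univ.filter fun w => T.Adj (Sum.inl u) (Sum.inr w)).card := by
  have himg : T.neighborSet (Sum.inl u)
      = Sum.inr '' ((univ.filter fun w => T.Adj (Sum.inl u) (Sum.inr w)) : Finset W) := by
    ext x
    cases x with
    | inl u' => simp [h u', neighborSet]
    | inr w => simp [neighborSet]
  rw [himg, Set.ncard_image_of_injective _ Sum.inr_injective, Set.ncard_coe_finset]

lemma gamma_ncard {U W : Type} [Fintype U] [Fintype W] (H : SimpleGraph (U ⊕ W)) (S : Finset U)
    [DecidablePred fun w => ∃ u ∈ S, H.Adj (Sum.inl u) (Sum.inr w)] :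
    ({w : W | ∃ u ∈ S, H.Adj (Sum.inl u) (Sum.inr w)}).ncard
      = (univ.filter fun w => ∃ u ∈ S, H.Adj (Sum.inl u) (Sum.inr w)).card := by
  rw [← Set.ncard_coe_finset]
  congr 1
  ext w
  simp

lemma backward
    {U W : Type} [Fintype U] [Fintype W] [DecidableEq U] [DecidableEq W]
    (H : SimpleGraph (U ⊕ W))
    (hbipU : ∀ u u' : U, ¬ H.Adj (Sum.inl u) (Sum.inl u'))
    (hbipW : ∀ w w' : W, ¬ H.Adj (Sum.inr w) (Sum.inr w'))
    (hconn : H.Connected)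
    (f : U → ℤ)
    (hineq : ∀ S : Finset U, S.Nonempty →
        ∑ u ∈ S, f u ≤
          (({w : W | ∃ u ∈ S, H.Adj (Sum.inl u) (Sum.inr w)}).ncard : ℤ) - 1)
    (hsum : ∑ u, f u = (Fintype.card W : ℤ) - 1) :
    ∃ T : SimpleGraph (U ⊕ W), T ≤ H ∧ T.IsTree ∧
        ∀ u : U, ((T.neighborSet (Sum.inl u)).ncard : ℤ) = f u + 1 := by
  classical
  -- Γ as a finset
  set NA : Finset U → Finset W :=
    fun S => univ.filter (fun w => ∃ u ∈ S, H.Adj (Sum.inl u) (Sum.inr w)) with hNAdef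
  have hNA : ∀ S : Finset U, S.Nonempty → ∑ u ∈ S, f u ≤ ((NA S).card : ℤ) - 1 := by
    intro S hS
    have := hineq S hS
    rwa [gamma_ncard] at this
  -- degenerate case: U empty
  cases isEmpty_or_nonempty U with
  | inl hU =>
      have hW1 : Fintype.card W = 1 := by
        have : ∑ u, f u = 0 := by simp
        rw [this] at hsum
        have hpos : 0 < Fintype.card W ∨ 0 = Fintype.card W := by
          rcases Nat.eq_zero_or_pos (Fintype.card W) with h | h
          · right; omega
          · left; exact h
        omega
      have hsub : Subsingleton (U ⊕ W) := by
        have : Fintype.card (U ⊕ W) ≤ 1 := by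
          rw [Fintype.card_sum, Fintype.card_eq_zero, hW1]
        exact Fintype.card_le_one_iff_subsingleton.1 this
      haveI := hsub
      haveI : Nonempty (U ⊕ W) := hconn.nonempty
      exact ⟨⊥, bot_le, bot_isTree, fun u => (hU.false u).elim⟩
  | inr hU =>
  cases isEmpty_or_nonempty W with
  | inl hW =>
      -- W empty: card U must be 1 and f u = -1
      have hgamma0 : ∀ S : Finset U, (NA S).card = 0 := by
        intro S
        simp [hNAdef, Finset.card_eq_zero]
      have hfneg : ∀ u : U, f u ≤ -1 := by
        intro u
        have := hNA {u} ⟨u, mem_singleton_self u⟩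
        rw [hgamma0] at this
        simpa using this
      have hW0 : Fintype.card W = 0 := Fintype.card_eq_zero
      have hsum' : ∑ u, f u = -1 := by rw [hsum, hW0]; ring
      have hcardU : Fintype.card U = 1 := by
        have hle : (-1 : ℤ) ≤ -(Fintype.card U : ℤ) := by
          calc (-1 : ℤ) = ∑ u, f u := hsum'.symm
          _ ≤ ∑ _u : U, (-1 : ℤ) := Finset.sum_le_sum (fun u _ => hfneg u)
          _ = -(Fintype.card U : ℤ) := by
              simp [Finset.sum_const, card_univ]
        have h1 : 1 ≤ Fintype.card U := Fintype.card_pos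
        have h2 : (Fintype.card U : ℤ) ≤ 1 := by linarith
        omega
      have hsub : Subsingleton (U ⊕ W) := by
        have : Fintype.card (U ⊕ W) ≤ 1 := by
          rw [Fintype.card_sum, hcardU, hW0]
        exact Fintype.card_le_one_iff_subsingleton.1 this
      haveI := hsub
      haveI : Nonempty (U ⊕ W) := hconn.nonempty
      haveI : Subsingleton U := Fintype.card_le_one_iff_subsingleton.1 (by omega)
      refine ⟨⊥, bot_le, bot_isTree, fun u => ?_⟩
      have huniv : (univ : Finset U) = {u} := by
        apply Finset.eq_singleton_iff_unique_mem.2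
        exact ⟨mem_univ u, fun x _ => Subsingleton.elim x u⟩
      have hfu : f u = -1 := by
        rw [← hsum', huniv, Finset.sum_singleton]
      have hns : (⊥ : SimpleGraph (U ⊕ W)).neighborSet (Sum.inl u) = ∅ := by
        ext x; simp
      rw [hns, hfu]
      simp
  | inr hW =>
  -- MAIN CASE
  -- Step A : f is nonnegative
  have hWpos : 1 ≤ Fintype.card W := Fintype.card_pos
  have hf0 : ∀ u : U, 0 ≤ f u := by
    intro u
    by_cases hcase : (univ.erase u).Nonempty
    · have h1 := hNA (univ.erase u) hcase
      have h2 : ∑ x ∈ univ.erase u, f x = (∑ x, f x) - f u := by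
        rw [← Finset.add_sum_erase _ f (mem_univ u)]; ring
      have h3 : (NA (univ.erase u)).card ≤ Fintype.card W := by
        calc (NA (univ.erase u)).card ≤ (univ : Finset W).card := Finset.card_le_univ _
        _ = Fintype.card W := Finset.card_univ
      rw [h2, hsum] at h1
      have h3' : ((NA (univ.erase u)).card : ℤ) ≤ (Fintype.card W : ℤ) := by
        exact_mod_cast h3
      linarith
    · rw [Finset.not_nonempty_iff_eq_empty, Finset.erase_eq_empty_iff] at hcase
      rcases hcase with h | h
      · exact absurd h (by simp [Finset.univ_nonempty.ne_empty])
      · have : ∑ x, f x = f u := by rw [h, Finset.sum_singleton]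
        rw [this] at hsum
        have : (1 : ℤ) ≤ (Fintype.card W : ℤ) := by exact_mod_cast hWpos
        omega
  set F : U → ℕ := fun u => (f u).toNat with hFdef
  have hF : ∀ u, (F u : ℤ) = f u := fun u => Int.toNat_of_nonneg (hf0 u)
  have hsumF : ∑ u, F u = Fintype.card W - 1 := by
    have : ((∑ u, F u : ℕ) : ℤ) = (Fintype.card W : ℤ) - 1 := by
      push_cast
      rw [Finset.sum_congr rfl (fun u _ => hF u)]
      exact hsum
    omega
  obtain ⟨w0⟩ := hW
  -- Hall's theorem setup
  set t : {w : W // w ≠ w0} → Finset (Σ u : U, Fin (F u)) :=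
    fun w => univ.filter (fun x => H.Adj (Sum.inl x.1) (Sum.inr w.1)) with htdef
  have hcard_subtype : Fintype.card {w : W // w ≠ w0} = Fintype.card W - 1 := by
    rw [Fintype.card_subtype_compl (· = w0), Fintype.card_subtype_eq]
  have hhall : ∀ A : Finset {w : W // w ≠ w0}, A.card ≤ (A.biUnion t).card := by
    intro A
    set ΓA : Finset U := univ.filter (fun u => ∃ w ∈ A, H.Adj (Sum.inl u) (Sum.inr w.1))
      with hGAdef
    have hbi : A.biUnion t = ΓA.sigma (fun u => (univ : Finset (Fin (F u)))) := by
      ext x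
      simp only [Finset.mem_biUnion, htdef, Finset.mem_filter, Finset.mem_univ, true_and,
        Finset.mem_sigma, hGAdef]
      tauto
    rw [hbi, Finset.card_sigma]
    simp only [Finset.card_univ, Fintype.card_fin]
    -- need : A.card ≤ ∑ u ∈ ΓA, F u
    by_cases hS : (univ \ ΓA : Finset U).Nonempty
    · have h1 := hNA _ hS
      -- NA (univ \ ΓA) ⊆ univ \ A.image val
      have h2 : NA (univ \ ΓA) ⊆ univ \ A.image Subtype.val := by
        intro w hw
        simp only [hNAdef, Finset.mem_filter, Finset.mem_univ, true_and, Finset.mem_sdiff] at hw ⊢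
        obtain ⟨u, hu, hadj⟩ := hw
        intro hmem
        rw [Finset.mem_image] at hmem
        obtain ⟨w', hw'A, rfl⟩ := hmem
        apply hu
        simp only [hGAdef, Finset.mem_filter, Finset.mem_univ, true_and]
        exact ⟨w', hw'A, hadj⟩
      have h3 : (NA (univ \ ΓA)).card ≤ Fintype.card W - A.card := by
        calc (NA (univ \ ΓA)).card ≤ (univ \ A.image Subtype.val).card :=
              Finset.card_le_card h2
        _ = Fintype.card W - A.card := by
              rw [Finset.card_sdiff_of_subset (Finset.subset_univ _), Finset.card_univ,
                Finset.card_image_of_injective _ Subtype.val_injective]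
      have h4 : ∑ u ∈ univ \ ΓA, f u = (∑ u, f u) - ∑ u ∈ ΓA, f u := by
        rw [Finset.sum_sdiff_eq_sub (Finset.subset_univ _)]
      have h5 : (A.card : ℤ) ≤ ∑ u ∈ ΓA, f u := by
        have hcast : ((NA (univ \ ΓA)).card : ℤ) ≤ (Fintype.card W : ℤ) - A.card := by
          have hA_le : A.card ≤ Fintype.card W := by
            calc A.card ≤ Fintype.card {w : W // w ≠ w0} := Finset.card_le_univ _
            _ ≤ Fintype.card W := by omega
          omega
        rw [h4, hsum] at h1
        linarith
      have h6 : ∑ u ∈ ΓA, f u = ((∑ u ∈ ΓA, F u : ℕ) : ℤ) := by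
        push_cast
        exact Finset.sum_congr rfl (fun u _ => (hF u).symm)
      rw [h6] at h5
      exact_mod_cast h5
    · have hGAuniv : ΓA = univ := by
        rw [Finset.not_nonempty_iff_eq_empty, Finset.sdiff_eq_empty_iff_subset] at hS
        exact Finset.univ_subset_iff.1 hS
      rw [hGAuniv]
      calc A.card ≤ Fintype.card {w : W // w ≠ w0} := Finset.card_le_univ _
      _ = Fintype.card W - 1 := hcard_subtype
      _ = ∑ u, F u := hsumF.symm
  obtain ⟨g, hginj, hgmem⟩ := (Finset.all_card_le_biUnion_card_iff_exists_injective t).1 hhall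
  -- define qq
  set qq : W → U := fun w => if h : w = w0 then Classical.arbitrary U else (g ⟨w, h⟩).1
    with hqqdef
  have hqq : ∀ (w : W) (h : w ≠ w0), qq w = (g ⟨w, h⟩).1 := by
    intro w h
    simp only [hqqdef, dif_neg h]
  have hqadj : ∀ (w : W), w ≠ w0 → H.Adj (Sum.inl (qq w)) (Sum.inr w) := by
    intro w h
    have := hgmem ⟨w, h⟩
    simp only [htdef, Finset.mem_filter] at this
    rw [hqq w h]
    exact this.2
  set fib : U → Finset W := fun u => univ.filter (fun w => w ≠ w0 ∧ qq w = u) with hfibdef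
  have hslicecard : ∀ u : U,
      (univ.filter (fun x : Σ v : U, Fin (F v) => x.1 = u)).card = F u := by
    intro u
    have hseq : univ.filter (fun x : Σ v : U, Fin (F v) => x.1 = u)
        = ({u} : Finset U).sigma (fun v => (univ : Finset (Fin (F v)))) := by
      ext x
      simp [Finset.mem_sigma]
    rw [hseq, Finset.card_sigma]
    simp
  have hfible : ∀ u, (fib u).card ≤ F u := by
    intro u
    set fib' : Finset {w : W // w ≠ w0} := univ.filter (fun w => qq w.1 = u) with hfib'def
    have himg : fib u = fib'.image Subtype.val := by
      ext w
      simp only [hfibdef, hfib'def, Finset.mem_filter, Finset.mem_univ, true_and,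
        Finset.mem_image]
      constructor
      · rintro ⟨h1, h2⟩; exact ⟨⟨w, h1⟩, h2, rfl⟩
      · rintro ⟨⟨w', hw'⟩, h2, rfl⟩; exact ⟨hw', h2⟩
    rw [himg, Finset.card_image_of_injective _ Subtype.val_injective]
    rw [← hslicecard u]
    apply Finset.card_le_card_of_injOn g
    · intro w hw
      simp only [hfib'def, Finset.mem_coe, Finset.mem_filter, Finset.mem_univ, true_and] at hw
      simp only [Finset.coe_filter, Finset.mem_coe, Set.mem_setOf_eq, Finset.mem_filter, Finset.mem_univ, true_and]
      rw [← hw, hqq w.1 w.2]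
    · intro a _ b _ hab
      exact hginj hab
  have hfibeq : ∀ u, (fib u).card = F u := by
    have hdisj : ∀ a ∈ (univ : Finset U), ∀ b ∈ (univ : Finset U), a ≠ b →
        Disjoint (fib a) (fib b) := by
      intro a _ b _ hab
      rw [Finset.disjoint_left]
      intro w hwa hwb
      simp only [hfibdef, Finset.mem_filter] at hwa hwb
      exact hab (hwa.2.2 ▸ hwb.2.2)
    have hbiu : univ.biUnion fib = univ.erase w0 := by
      ext w
      simp only [Finset.mem_biUnion, Finset.mem_erase, hfibdef, Finset.mem_filter,
        Finset.mem_univ, true_and]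
      constructor
      · rintro ⟨u, h1, -⟩; exact ⟨h1, trivial⟩
      · rintro ⟨h1, -⟩; exact ⟨qq w, h1, rfl⟩
    have hsum2 : ∑ u, (fib u).card = Fintype.card W - 1 := by
      rw [← Finset.card_biUnion hdisj, hbiu, Finset.card_erase_of_mem (mem_univ w0),
        Finset.card_univ]
    have := (Finset.sum_eq_sum_iff_of_le (fun u (_ : u ∈ univ) => hfible u)).1
      (by rw [hsum2, hsumF])
    intro u
    exact this u (mem_univ u)
  -- key claim C1
  have C1 : ∀ A : Finset U, A.Nonempty →
      ∃ u ∈ A, ∃ w : W, H.Adj (Sum.inl u) (Sum.inr w) ∧ (w = w0 ∨ qq w ∉ A) := by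
    intro A hA
    by_contra hcon
    push_neg at hcon
    -- hcon : ∀ u ∈ A, ∀ w, Adj → w ≠ w0 ∧ qq w ∈ A
    have hQA : NA A = A.biUnion fib := by
      ext w
      simp only [hNAdef, Finset.mem_filter, Finset.mem_univ, true_and, Finset.mem_biUnion,
        hfibdef]
      constructor
      · rintro ⟨u, huA, hadj⟩
        obtain ⟨hne, hmem⟩ := hcon u huA w hadj
        exact ⟨qq w, hmem, hne, rfl⟩
      · rintro ⟨u, huA, hne, rfl⟩
        exact ⟨qq w, huA, hqadj w hne⟩
    have hdisj : ∀ a ∈ A, ∀ b ∈ A, a ≠ b → Disjoint (fib a) (fib b) := by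
      intro a _ b _ hab
      rw [Finset.disjoint_left]
      intro w hwa hwb
      simp only [hfibdef, Finset.mem_filter] at hwa hwb
      exact hab (hwa.2.2 ▸ hwb.2.2)
    have hcard : (NA A).card = ∑ u ∈ A, F u := by
      rw [hQA, Finset.card_biUnion hdisj]
      exact Finset.sum_congr rfl (fun u _ => hfibeq u)
    have h1 := hNA A hA
    rw [hcard] at h1
    have h2 : ((∑ u ∈ A, F u : ℕ) : ℤ) = ∑ u ∈ A, f u := by
      push_cast
      exact Finset.sum_congr rfl (fun u _ => hF u)
    rw [h2] at h1
    linarith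
  -- iterated reachability sets
  set R : ℕ → Finset U := fun n => Nat.rec ∅
    (fun _ Rn => univ.filter
      (fun u => ∃ w : W, H.Adj (Sum.inl u) (Sum.inr w) ∧ (w = w0 ∨ qq w ∈ Rn))) n
    with hRdef
  have hR0 : R 0 = ∅ := rfl
  have hRsucc : ∀ n, R (n + 1) = univ.filter
      (fun u => ∃ w : W, H.Adj (Sum.inl u) (Sum.inr w) ∧ (w = w0 ∨ qq w ∈ R n)) :=
    fun n => rfl
  have hRmono : ∀ n, R n ⊆ R (n + 1) := by
    intro n
    induction n with
    | zero => rw [hR0]; exact Finset.empty_subset _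
    | succ n ih =>
        rw [hRsucc n, hRsucc (n + 1)]
        intro u hu
        rw [Finset.mem_filter] at hu ⊢
        obtain ⟨h0, w, hadj, hw⟩ := hu
        exact ⟨h0, w, hadj, hw.imp id (fun h => ih h)⟩
  have hstab : ∀ n, R n = R (n + 1) → R n = univ := by
    intro n heq
    by_contra hne
    have hA : (univ \ R n).Nonempty := by
      rw [Finset.sdiff_nonempty]
      intro hsub
      exact hne (Finset.univ_subset_iff.1 hsub)
    obtain ⟨u, huA, w, hadj, hw⟩ := C1 _ hA
    rw [Finset.mem_sdiff] at huA
    apply huA.2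
    rw [heq, hRsucc]
    rw [Finset.mem_filter]
    refine ⟨mem_univ u, w, hadj, ?_⟩
    rcases hw with h | h
    · exact Or.inl h
    · right
      by_contra hcon2
      exact h (by rw [Finset.mem_sdiff]; exact ⟨mem_univ _, hcon2⟩)
  have hgrow : ∀ n, n ≤ (R n).card ∨ R n = univ := by
    intro n
    induction n with
    | zero => left; omega
    | succ n ih =>
        rcases ih with h | h
        · by_cases heq : R n = R (n + 1)
          · right
            have h2 := hstab n heq
            rw [← heq]
            exact h2
          · left
            have hss : R n ⊂ R (n + 1) := Finset.ssubset_iff_subset_ne.2 ⟨hRmono n, heq⟩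
            have := Finset.card_lt_card hss
            omega
        · right
          exact Finset.univ_subset_iff.1 (h ▸ hRmono n)
  have hex : ∀ u : U, ∃ n, u ∈ R n := by
    intro u
    rcases hgrow (Fintype.card U) with h | h
    · have hle : (R (Fintype.card U)).card ≤ Fintype.card U := Finset.card_le_univ _
      have : (R (Fintype.card U)).card = Fintype.card U := le_antisymm hle h
      exact ⟨Fintype.card U, (Finset.card_eq_iff_eq_univ _).1 this ▸ mem_univ u⟩
    · exact ⟨Fintype.card U, h ▸ mem_univ u⟩
  set rk : U → ℕ := fun u => Nat.find (hex u) with hrkdef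
  have hrkmem : ∀ u, u ∈ R (rk u) := fun u => Nat.find_spec (hex u)
  have hrkpos : ∀ u, rk u ≠ 0 := by
    intro u hzero
    have := hrkmem u
    rw [hzero, hR0] at this
    exact absurd this (Finset.notMem_empty u)
  have C3 : ∀ u : U, ∃ w : W, H.Adj (Sum.inl u) (Sum.inr w) ∧
      (w = w0 ∨ (w ≠ w0 ∧ rk (qq w) < rk u)) := by
    intro u
    obtain ⟨m, hm⟩ : ∃ m, rk u = m + 1 := ⟨rk u - 1, by have := hrkpos u; omega⟩
    have hmem := hrkmem u
    rw [hm, hRsucc, Finset.mem_filter] at hmem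
    obtain ⟨-, w, hadj, hw⟩ := hmem
    by_cases hww : w = w0
    · exact ⟨w, hadj, Or.inl hww⟩
    · refine ⟨w, hadj, Or.inr ⟨hww, ?_⟩⟩
      rcases hw with h | h
      · exact absurd h hww
      · have : rk (qq w) ≤ m := Nat.find_le h
        omega
  choose p hpadj hpp using C3
  -- the tree
  set E : U → W → Prop := fun u w => (w ≠ w0 ∧ qq w = u) ∨ p u = w with hEdef
  set T : SimpleGraph (U ⊕ W) := SimpleGraph.fromRel
    (fun x y => ∃ u w, x = Sum.inl u ∧ y = Sum.inr w ∧ E u w) with hTdef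
  have hTadj : ∀ u w, T.Adj (Sum.inl u) (Sum.inr w) ↔ E u w := by
    intro u w
    rw [hTdef, SimpleGraph.fromRel_adj]
    constructor
    · rintro ⟨-, ⟨u', w', h1, h2, hE⟩ | ⟨u', w', h1, h2, hE⟩⟩
      · cases h1; cases h2; exact hE
      · exact absurd h1 (by simp)
    · intro hE
      exact ⟨by simp, Or.inl ⟨u, w, rfl, rfl, hE⟩⟩
  have hTnoll : ∀ u u' : U, ¬ T.Adj (Sum.inl u) (Sum.inl u') := by
    intro u u' h
    rw [hTdef, SimpleGraph.fromRel_adj] at h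
    rcases h.2 with ⟨a, b, h1, h2, -⟩ | ⟨a, b, h1, h2, -⟩ <;> simp at h1 h2
  have hTnorr : ∀ w w' : W, ¬ T.Adj (Sum.inr w) (Sum.inr w') := by
    intro w w' h
    rw [hTdef, SimpleGraph.fromRel_adj] at h
    rcases h.2 with ⟨a, b, h1, h2, -⟩ | ⟨a, b, h1, h2, -⟩ <;> simp at h1 h2
  have hEadj : ∀ u w, E u w → H.Adj (Sum.inl u) (Sum.inr w) := by
    intro u w hE
    rcases hE with ⟨hne, rfl⟩ | heq
    · exact hqadj w hne
    · rw [← heq]; exact hpadj u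
  have hTH : T ≤ H := by
    intro x y hxy
    rw [hTdef, SimpleGraph.fromRel_adj] at hxy
    rcases hxy.2 with ⟨u, w, rfl, rfl, hE⟩ | ⟨u, w, rfl, rfl, hE⟩
    · exact hEadj u w hE
    · exact (hEadj u w hE).symm
  -- connectivity
  have hreach : ∀ u : U, T.Reachable (Sum.inl u) (Sum.inr w0) := by
    have key : ∀ n, ∀ u : U, rk u ≤ n → T.Reachable (Sum.inl u) (Sum.inr w0) := by
      intro n
      induction n with
      | zero => intro u hu; exact absurd (Nat.le_zero.1 hu) (hrkpos u)
      | succ n ih =>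
          intro u hu
          have h1 : T.Adj (Sum.inl u) (Sum.inr (p u)) := (hTadj u (p u)).2 (Or.inr rfl)
          rcases hpp u with h | ⟨hne, hlt⟩
          · rw [← h]; exact h1.reachable
          · have h2 : T.Adj (Sum.inl (qq (p u))) (Sum.inr (p u)) :=
              (hTadj _ _).2 (Or.inl ⟨hne, rfl⟩)
            have h3 : T.Reachable (Sum.inl (qq (p u))) (Sum.inr w0) := ih _ (by omega)
            exact h1.reachable.trans (h2.symm.reachable.trans h3)
    intro u
    exact key (rk u) u le_rfl
  have hconnT : T.Connected := by
    have hpre : ∀ x : U ⊕ W, T.Reachable x (Sum.inr w0) := by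
      intro x
      cases x with
      | inl u => exact hreach u
      | inr w =>
          by_cases hww : w = w0
          · rw [hww]
          · have h2 : T.Adj (Sum.inl (qq w)) (Sum.inr w) :=
              (hTadj _ _).2 (Or.inl ⟨hww, rfl⟩)
            exact h2.symm.reachable.trans (hreach (qq w))
    constructor
    intro x y
    exact (hpre x).trans (hpre y).symm
  -- acyclicity
  have hacyc : T.IsAcyclic := by
    apply acyclic_of_parent T
      (Sum.elim (fun u => Sum.inr (p u))
        (fun w => if w = w0 then Sum.inr w0 else Sum.inl (qq w)))
      (Sum.elim (fun u => 2 * rk u + 1)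
        (fun w => if w = w0 then 0 else 2 * rk (qq w) + 2))
    have main : ∀ u w, E u w →
        ((Sum.elim (fun u => Sum.inr (p u))
          (fun w => if w = w0 then Sum.inr w0 else Sum.inl (qq w)) (Sum.inl u : U ⊕ W)
            = Sum.inr w ∧
          Sum.elim (fun u => 2 * rk u + 1)
            (fun w => if w = w0 then 0 else 2 * rk (qq w) + 2) (Sum.inr w : U ⊕ W)
            < Sum.elim (fun u => 2 * rk u + 1)
            (fun w => if w = w0 then 0 else 2 * rk (qq w) + 2) (Sum.inl u : U ⊕ W)) ∨
        (Sum.elim (fun u => Sum.inr (p u))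
          (fun w => if w = w0 then Sum.inr w0 else Sum.inl (qq w)) (Sum.inr w : U ⊕ W)
            = Sum.inl u ∧
          Sum.elim (fun u => 2 * rk u + 1)
            (fun w => if w = w0 then 0 else 2 * rk (qq w) + 2) (Sum.inl u : U ⊕ W)
            < Sum.elim (fun u => 2 * rk u + 1)
            (fun w => if w = w0 then 0 else 2 * rk (qq w) + 2) (Sum.inr w : U ⊕ W))) := by
      intro u w hE
      by_cases hq : w ≠ w0 ∧ qq w = u
      · right
        refine ⟨?_, ?_⟩
        · simp only [Sum.elim_inr, if_neg hq.1, hq.2]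
        · simp only [Sum.elim_inl, Sum.elim_inr, if_neg hq.1, hq.2]
          omega
      · have hpu : p u = w := by
          rcases hE with h | h
          · exact absurd h hq
          · exact h
        left
        refine ⟨by simp only [Sum.elim_inl, hpu], ?_⟩
        simp only [Sum.elim_inl, Sum.elim_inr]
        by_cases hww : w = w0
        · rw [if_pos hww]; omega
        · rw [if_neg hww]
          rcases hpp u with h | ⟨-, hlt⟩
          · rw [hpu] at h; exact absurd h hww
          · rw [hpu] at hlt; omega
    intro x y hxy
    rw [hTdef, SimpleGraph.fromRel_adj] at hxy
    rcases hxy.2 with ⟨u, w, rfl, rfl, hE⟩ | ⟨u, w, rfl, rfl, hE⟩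
    · exact main u w hE
    · exact (main u w hE).symm
  refine ⟨T, hTH, ⟨hconnT, hacyc⟩, ?_⟩
  -- degrees
  intro u
  have hnb := ncard_nbr T u (hTnoll u)
  have hfil : (univ.filter fun w => T.Adj (Sum.inl u) (Sum.inr w)) = fib u ∪ {p u} := by
    ext w
    simp only [Finset.mem_filter, Finset.mem_univ, true_and, hTadj u w, hEdef,
      Finset.mem_union, Finset.mem_singleton, hfibdef, eq_comm] <;> tauto
  have hpnotfib : p u ∉ fib u := by
    simp only [hfibdef, Finset.mem_filter, Finset.mem_univ, true_and]
    rintro ⟨hne, heq⟩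
    rcases hpp u with h | ⟨-, hlt⟩
    · exact hne h
    · rw [heq] at hlt; omega
  have hcardu : (univ.filter fun w => T.Adj (Sum.inl u) (Sum.inr w)).card = F u + 1 := by
    rw [hfil, Finset.card_union_of_disjoint (by
      rw [Finset.disjoint_singleton_right]; exact hpnotfib), Finset.card_singleton, hfibeq]
  rw [hnb, hcardu]
  push_cast
  rw [hF u]


lemma forward
    {U W : Type} [Fintype U] [Fintype W] [DecidableEq U] [DecidableEq W]
    (H : SimpleGraph (U ⊕ W))
    (hbipU : ∀ u u' : U, ¬ H.Adj (Sum.inl u) (Sum.inl u'))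
    (hbipW : ∀ w w' : W, ¬ H.Adj (Sum.inr w) (Sum.inr w'))
    (f : U → ℤ)
    (T : SimpleGraph (U ⊕ W)) (hTH : T ≤ H) (hT : T.IsTree)
    (hdeg : ∀ u : U, ((T.neighborSet (Sum.inl u)).ncard : ℤ) = f u + 1) :
    (∀ S : Finset U, S.Nonempty →
        ∑ u ∈ S, f u ≤
          (({w : W | ∃ u ∈ S, H.Adj (Sum.inl u) (Sum.inr w)}).ncard : ℤ) - 1) ∧
      ∑ u, f u = (Fintype.card W : ℤ) - 1 := by
  classical
  have hTbipU : ∀ u u' : U, ¬ T.Adj (Sum.inl u) (Sum.inl u') := fun u u' h => hbipU u u' (hTH h)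
  have hTbipW : ∀ w w' : W, ¬ T.Adj (Sum.inr w) (Sum.inr w') := fun w w' h => hbipW w w' (hTH h)
  cases isEmpty_or_nonempty W with
  | inl hW =>
      have hnoadj : ∀ x y : U ⊕ W, ¬ T.Adj x y := by
        intro x y h
        cases x with
        | inl u =>
            cases y with
            | inl u' => exact hTbipU u u' h
            | inr w => exact hW.false w
        | inr w => exact hW.false w
      have heq : ∀ x y : U ⊕ W, x = y := by
        intro x y
        obtain ⟨wlk⟩ := hT.isConnected.preconnected x y
        cases wlk with
        | nil => rfl
        | cons h _ => exact absurd h (hnoadj _ _)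
      have hfu : ∀ u : U, f u = -1 := by
        intro u
        have hd := hdeg u
        have hns : T.neighborSet (Sum.inl u) = ∅ := by
          ext y
          simp only [SimpleGraph.mem_neighborSet, Set.mem_empty_iff_false, iff_false]
          exact hnoadj _ _
        rw [hns] at hd
        simp only [Set.ncard_empty, Nat.cast_zero] at hd
        linarith
      constructor
      · intro S hS
        obtain ⟨u, hu⟩ := hS
        have hSsing : S = {u} := by
          apply Finset.eq_singleton_iff_unique_mem.2
          exact ⟨hu, fun x _ => Sum.inl_injective (heq (Sum.inl x) (Sum.inl u))⟩
        have hgam : ({w : W | ∃ u ∈ S, H.Adj (Sum.inl u) (Sum.inr w)}) = ∅ :=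
          Set.eq_empty_of_isEmpty _
        rw [hgam, hSsing, Finset.sum_singleton, hfu u]
        simp
      · obtain ⟨x⟩ := hT.isConnected.nonempty
        obtain ⟨u0⟩ : Nonempty U := by
          cases x with
          | inl u => exact ⟨u⟩
          | inr w => exact (hW.false w).elim
        have huniv : (univ : Finset U) = {u0} := by
          apply Finset.eq_singleton_iff_unique_mem.2
          exact ⟨mem_univ u0, fun x _ => Sum.inl_injective (heq (Sum.inl x) (Sum.inl u0))⟩
        rw [huniv, Finset.sum_singleton, hfu u0, Fintype.card_eq_zero]
        simp
  | inr hW =>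
  obtain ⟨w0⟩ := hW
  set r : U ⊕ W := Sum.inr w0 with hr
  have hEU := hT.existsUnique_path
  choose pth0 hspec using hEU
  set pth : (v : U ⊕ W) → T.Walk v r := fun v => pth0 v r with hpthdef
  have hps : ∀ v, (pth v).IsPath := fun v => (hspec v r).1
  have huniq : ∀ (v : U ⊕ W) (q : T.Walk v r), q.IsPath → q = pth v :=
    fun v q hq => (hspec v r).2 q hq
  set ℓ : U ⊕ W → ℕ := fun v => (pth v).length with hldef
  set pr : U ⊕ W → U ⊕ W := fun v => (pth v).getVert 1 with hprdef
  have hinlr : ∀ u : U, Sum.inl u ≠ r := by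
    intro u h
    rw [hr] at h
    exact Sum.inl_ne_inr h
  have hL0 : ∀ v, ℓ v = 0 ↔ v = r := by
    intro v
    constructor
    · intro h
      exact Walk.eq_of_length_eq_zero h
    · intro hv
      subst hv
      have hnil := (Walk.isPath_iff_eq_nil (p := pth r)).1 (hps r)
      show (pth r).length = 0
      rw [hnil]
      rfl
  have hLA : ∀ v, v ≠ r → T.Adj v (pr v) := by
    intro v hv
    have h0 : 0 < (pth v).length := by
      rcases Nat.eq_zero_or_pos (pth v).length with h | h
      · exact absurd ((hL0 v).1 h) hv
      · exact h
    have := (pth v).adj_getVert_succ h0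
    rw [Walk.getVert_zero] at this
    exact this
  have hLA2 : ∀ v, v ≠ r → ℓ (pr v) + 1 = ℓ v := by
    intro v hv
    have hnn : ¬ (pth v).Nil := Walk.not_nil_of_ne hv
    obtain ⟨y, hadj, q, hEq⟩ := Walk.not_nil_iff.1 hnn
    have hprv : pr v = y := by
      rw [hprdef]
      simp only
      rw [hEq, Walk.getVert_cons_succ, Walk.getVert_zero]
    have hqp : q.IsPath := by
      have := hps v
      rw [hEq, Walk.cons_isPath_iff] at this
      exact this.1
    have hqe : q = pth y := huniq y q hqp
    rw [hprv, hldef]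
    simp only
    rw [hEq, Walk.length_cons, hqe]
  have hLB : ∀ (v x : U ⊕ W) (hx : x ∈ (pth v).support), ℓ x ≤ ℓ v ∧ (x ≠ v → ℓ x < ℓ v) := by
    intro v x hx
    have hd : (pth v).dropUntil x hx = pth x := huniq x _ ((hps v).dropUntil hx)
    have hsp := (pth v).take_spec hx
    have hlen : ((pth v).takeUntil x hx).length + ((pth v).dropUntil x hx).length
        = (pth v).length := by
      rw [← Walk.length_append, hsp]
    rw [hd] at hlen
    have hll : ℓ x ≤ ℓ v := by rw [hldef]; simp only; omega
    refine ⟨hll, fun hne => ?_⟩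
    have htk : ((pth v).takeUntil x hx).length ≠ 0 := by
      intro h0
      exact hne (Walk.eq_of_length_eq_zero h0).symm
    rw [hldef]
    simp only
    omega
  have hLC : ∀ v y, T.Adj v y → ℓ y < ℓ v → pr v = y ∧ ℓ v = ℓ y + 1 := by
    intro v y hadj hlt
    have hvs : v ∉ (pth y).support := by
      intro hmem
      have := (hLB y v hmem).2 hadj.ne
      omega
    have hc : (Walk.cons hadj (pth y)).IsPath := (hps y).cons hvs
    have hce := huniq v _ hc
    constructor
    · show (pth v).getVert 1 = y
      rw [← hce, Walk.getVert_cons_succ, Walk.getVert_zero]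
    · show (pth v).length = (pth y).length + 1
      rw [← hce, Walk.length_cons]
  have hLD : ∀ v y, T.Adj v y → ℓ v ≠ ℓ y := by
    intro v y hadj hq
    rcases em (v ∈ (pth y).support) with hm | hm
    · have := (hLB y v hm).2 hadj.ne
      omega
    · have hc : (Walk.cons hadj (pth y)).IsPath := (hps y).cons hm
      have hce := huniq v _ hc
      have hlen : ℓ v = ℓ y + 1 := by
        show (pth v).length = (pth y).length + 1
        rw [← hce, Walk.length_cons]
      omega
  have hLE : ∀ v y, T.Adj v y → (pr v = y ∧ ℓ v = ℓ y + 1) ∨ (pr y = v ∧ ℓ y = ℓ v + 1) := by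
    intro v y hadj
    rcases lt_trichotomy (ℓ v) (ℓ y) with h | h | h
    · exact Or.inr (hLC y v hadj.symm h)
    · exact absurd h (hLD v y hadj)
    · exact Or.inl (hLC v y hadj h)
  -- parent of U-vertices lands in W
  have hpw0 : ∀ u : U, ∃ w : W, pr (Sum.inl u) = Sum.inr w := by
    intro u
    have hadj := hLA (Sum.inl u) (hinlr u)
    cases hcase : pr (Sum.inl u) with
    | inl u' => rw [hcase] at hadj; exact absurd hadj (hTbipU u u')
    | inr w => exact ⟨w, rfl⟩
  choose pw hpwEq using hpw0
  set chl : U → Finset W := fun u =>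
    univ.filter (fun w => Sum.inr w ≠ r ∧ pr (Sum.inr w) = Sum.inl u) with hchl
  have hnbr : ∀ u, (univ.filter fun w => T.Adj (Sum.inl u) (Sum.inr w)) = chl u ∪ {pw u} := by
    intro u
    ext w
    simp only [Finset.mem_filter, Finset.mem_univ, true_and, Finset.mem_union,
      Finset.mem_singleton, hchl]
    constructor
    · intro hadj
      rcases hLE _ _ hadj with ⟨h1, h2⟩ | ⟨h1, h2⟩
      · right
        have := hpwEq u
        rw [h1] at this
        exact Sum.inr_injective this
      · left
        refine ⟨?_, h1⟩
        intro heqr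
        have h0 := (hL0 (Sum.inr w)).2 heqr
        omega
    · rintro (⟨hne, hpr⟩ | rfl)
      · have := hLA (Sum.inr w) hne
        rw [hpr] at this
        exact this.symm
      · have := hLA (Sum.inl u) (hinlr u)
        rw [hpwEq u] at this
        exact this
  have hpwnot : ∀ u, pw u ∉ chl u := by
    intro u
    simp only [hchl, Finset.mem_filter, Finset.mem_univ, true_and]
    rintro ⟨hne, hpr⟩
    have h1 := hLA2 (Sum.inl u) (hinlr u)
    rw [hpwEq u] at h1
    have h2 := hLA2 (Sum.inr (pw u)) hne
    rw [hpr] at h2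
    omega
  have hfu : ∀ u : U, f u = ((chl u).card : ℤ) := by
    intro u
    have hnb := ncard_nbr T u (hTbipU u)
    have hd := hdeg u
    rw [hnb, hnbr u, Finset.card_union_of_disjoint
      (Finset.disjoint_singleton_right.2 (hpwnot u)), Finset.card_singleton] at hd
    push_cast at hd
    linarith
  have hdisj : ∀ (S : Finset U), ∀ a ∈ S, ∀ b ∈ S, a ≠ b → Disjoint (chl a) (chl b) := by
    intro S a _ b _ hab
    rw [Finset.disjoint_left]
    intro w hwa hwb
    simp only [hchl, Finset.mem_filter] at hwa hwb
    exact hab (Sum.inl_injective (hwa.2.2 ▸ hwb.2.2))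
  have hsumS : ∀ S : Finset U, ∑ u ∈ S, f u = ((S.biUnion chl).card : ℤ) := by
    intro S
    rw [Finset.card_biUnion (hdisj S)]
    push_cast
    exact Finset.sum_congr rfl fun u _ => hfu u
  constructor
  · intro S hS
    obtain ⟨u0, hu0S, hu0min⟩ := S.exists_min_image (fun u => ℓ (Sum.inl u)) hS
    set ΓS := univ.filter (fun w => ∃ u ∈ S, H.Adj (Sum.inl u) (Sum.inr w)) with hGS
    have hpwmem : pw u0 ∈ ΓS := by
      rw [hGS, Finset.mem_filter]
      refine ⟨mem_univ _, u0, hu0S, ?_⟩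
      have := hLA (Sum.inl u0) (hinlr u0)
      rw [hpwEq u0] at this
      exact hTH this
    have hsubset : S.biUnion chl ⊆ ΓS.erase (pw u0) := by
      intro w hw
      rw [Finset.mem_biUnion] at hw
      obtain ⟨u, huS, hwchl⟩ := hw
      simp only [hchl, Finset.mem_filter, Finset.mem_univ, true_and] at hwchl
      obtain ⟨hne, hpr⟩ := hwchl
      rw [Finset.mem_erase]
      constructor
      · intro heq
        have h2 := hLA2 (Sum.inr w) hne
        rw [hpr] at h2
        have h1 := hLA2 (Sum.inl u0) (hinlr u0)
        rw [hpwEq u0, ← heq] at h1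
        have := hu0min u huS
        omega
      · rw [hGS, Finset.mem_filter]
        refine ⟨mem_univ _, u, huS, ?_⟩
        have := hLA (Sum.inr w) hne
        rw [hpr] at this
        exact hTH this.symm
    have hcardle : (S.biUnion chl).card ≤ ΓS.card - 1 := by
      calc (S.biUnion chl).card ≤ (ΓS.erase (pw u0)).card := Finset.card_le_card hsubset
      _ = ΓS.card - 1 := Finset.card_erase_of_mem hpwmem
    have h1 : 1 ≤ ΓS.card := Finset.card_pos.2 ⟨pw u0, hpwmem⟩
    rw [gamma_ncard H S, ← hGS, hsumS S]
    omega
  · have huniveq : univ.biUnion chl = univ.erase w0 := by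
      ext w
      simp only [Finset.mem_biUnion, Finset.mem_erase, Finset.mem_univ, and_true,
        true_and, hchl, Finset.mem_filter]
      constructor
      · rintro ⟨u, hu⟩
        intro h
        rw [h] at hu
        exact hu.1 hr.symm
      · intro hne
        have hner : Sum.inr w ≠ r := by
          rw [hr]
          intro h
          exact hne (Sum.inr_injective h)
        have hside : ∃ u : U, pr (Sum.inr w) = Sum.inl u := by
          have hprw := hLA (Sum.inr w) hner
          generalize hg : pr (Sum.inr w) = x at hprw ⊢
          cases x with
          | inl u => exact ⟨u, rfl⟩
          | inr w' => exact absurd hprw (hTbipW w w')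
        obtain ⟨u, hcase⟩ := hside
        exact ⟨u, hner, hcase⟩
    haveI : Nonempty W := ⟨w0⟩
    have h1 : 1 ≤ Fintype.card W := Fintype.card_pos
    rw [hsumS univ, huniveq, Finset.card_erase_of_mem (mem_univ w0), Finset.card_univ]
    omega


end HTAux

open Finset

/-- hypertree characterization. For a finite connected bipartite graph `H`
with classes `U` and `W`, a vector `f : U → ℤ` is a hypertree on `U` iff
`f(S) ≤ |Γ(S)| − 1` for every nonempty `S ⊆ U` and `f(U) = |W| − 1`. -/
theorem hypertree_characterization
    {U W : Type} [Fintype U] [Fintype W] [DecidableEq U] [DecidableEq W]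
    (H : SimpleGraph (U ⊕ W))
    (hbipU : ∀ u u' : U, ¬ H.Adj (Sum.inl u) (Sum.inl u'))
    (hbipW : ∀ w w' : W, ¬ H.Adj (Sum.inr w) (Sum.inr w'))
    (hconn : H.Connected)
    (f : U → ℤ) :
    (∃ T : SimpleGraph (U ⊕ W), T ≤ H ∧ T.IsTree ∧
        ∀ u : U, ((T.neighborSet (Sum.inl u)).ncard : ℤ) = f u + 1) ↔
    ((∀ S : Finset U, S.Nonempty →
        ∑ u ∈ S, f u ≤
          (({w : W | ∃ u ∈ S, H.Adj (Sum.inl u) (Sum.inr w)}).ncard : ℤ) - 1) ∧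
      ∑ u, f u = (Fintype.card W : ℤ) - 1) := by
  constructor
  · rintro ⟨T, hTH, hT, hdeg⟩
    exact HTAux.forward H hbipU hbipW f T hTH hT hdeg
  · rintro ⟨h1, h2⟩
    exact HTAux.backward H hbipU hbipW hconn f h1 h2
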